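/- Let M be a real Hilbert space, f₁, …, f_d ∈ M, H(S) = Σ_{i∈S} fᵢ ⊗ fᵢ for S ⊆ {1,…,d}, and Φ(S) = log det(I + H(S)). Then Φ is submodular: for every S ⊆ {1,…,d} and distinct r, t ∉ S, Φ(S ∪ {r}) - Φ(S) ≥ Φ(S ∪ {r,t}) - Φ(S ∪ {t}). -/

import Mathlib

open scoped RealInnerProductSpace

/-- The rank-one operator `u ⊗ v : x ↦ ⟪v, x⟫ u` on a real inner product space. -/
noncomputable def rankOne {M : Type*} [NormedAddCommGroup M] [InnerProductSpace ℝ M]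
    (u v : M) : M →L[ℝ] M := (innerSL ℝ v).smulRight u

/-- The Fredholm determinant `det (I + T)` of a perturbation of the identity by a
finite-rank operator `T`.  Since `range T` is a finite-dimensional invariant subspace of
`I + T` containing all (generalized) eigenvectors of `T` with nonzero eigenvalue, this equals
the finite-dimensional determinant of `I + T` restricted to `range T`, i.e. the product
`Π (1 + λₙ)` over the nonzero eigenvalues `λₙ` of `T` counted with algebraic multiplicity. -/
noncomputable def fredholmDet {M : Type*} [NormedAddCommGroup M] [InnerProductSpace ℝ M]
    (T : M →L[ℝ] M) : ℝ :=
  LinearMap.det ((1 + T : M →L[ℝ] M).toLinearMap.restrict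
    (p := LinearMap.range (T : M →ₗ[ℝ] M))
    (fun x hx => by
      obtain ⟨y, rfl⟩ := hx
      exact ⟨y + T y, by simp [map_add]⟩))

section Restrict

lemma det_restrict_of_shift {E : Type*} [AddCommGroup E] [Module ℝ E] [FiniteDimensional ℝ E]
    (f : E →ₗ[ℝ] E) (p : Submodule ℝ E) (hshift : ∀ x : E, f x - x ∈ p)
    (hinv : ∀ x ∈ p, f x ∈ p) :
    LinearMap.det f = LinearMap.det (f.restrict hinv) := by
  classical
  obtain ⟨q, hq⟩ := Submodule.exists_isCompl p
  set e : (p × q) ≃ₗ[ℝ] E := Submodule.prodEquivOfIsCompl p q hq with he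
  set g : (p × q) →ₗ[ℝ] (p × q) :=
    (e.symm : E →ₗ[ℝ] (p × q)) ∘ₗ f ∘ₗ (e : (p × q) →ₗ[ℝ] E) with hg
  have hdetg : LinearMap.det g = LinearMap.det f := by
    have h := LinearMap.det_conj f e.symm
    simpa [hg] using h
  have hesymm_p : ∀ (y : E) (hy : y ∈ p), e.symm y = (⟨y, hy⟩, 0) := by
    intro y hy
    rw [LinearEquiv.symm_apply_eq, Submodule.coe_prodEquivOfIsCompl']
    simp
  let bp := Module.finBasis ℝ p
  let bq := Module.finBasis ℝ q
  let b := bp.prod bq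
  have hcol1 : ∀ j, g (bp j, 0) = (f.restrict hinv (bp j), 0) := by
    intro j
    rw [hg]
    simp only [LinearMap.comp_apply, LinearEquiv.coe_coe]
    rw [show e ((bp j : p), (0 : q)) = ((bp j : p) : E) by
      rw [Submodule.coe_prodEquivOfIsCompl']; simp]
    exact hesymm_p _ (hinv _ (bp j).2)
  have hcol2 : ∀ j, g (0, bq j) = (⟨f (bq j) - bq j, hshift _⟩, bq j) := by
    intro j
    rw [hg]
    simp only [LinearMap.comp_apply, LinearEquiv.coe_coe]
    rw [show e ((0 : p), (bq j : q)) = ((bq j : q) : E) by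
      rw [Submodule.coe_prodEquivOfIsCompl']; simp]
    rw [LinearEquiv.symm_apply_eq, Submodule.coe_prodEquivOfIsCompl']
    simp
  have hbinl : ∀ j, b (Sum.inl j) = (bp j, 0) := fun j => by simp [b, Module.Basis.prod_apply]
  have hbinr : ∀ j, b (Sum.inr j) = (0, bq j) := fun j => by simp [b, Module.Basis.prod_apply]
  rw [← hdetg, ← LinearMap.det_toMatrix b g, ← LinearMap.det_toMatrix bp (f.restrict hinv)]
  have hmat : LinearMap.toMatrix b b g =
      Matrix.fromBlocks (LinearMap.toMatrix bp bp (f.restrict hinv))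
        (Matrix.of fun i j => bp.repr ⟨f (bq j) - bq j, hshift _⟩ i) 0 1 := by
    ext k l
    rcases k with i | i <;> rcases l with j | j
    · rw [LinearMap.toMatrix_apply, Matrix.fromBlocks_apply₁₁, LinearMap.toMatrix_apply,
        hbinl, hcol1]
      exact Module.Basis.prod_repr_inl _ _ _ _
    · rw [LinearMap.toMatrix_apply, Matrix.fromBlocks_apply₁₂, hbinr, hcol2]
      exact Module.Basis.prod_repr_inl _ _ _ _
    · rw [LinearMap.toMatrix_apply, Matrix.fromBlocks_apply₂₁, hbinl, hcol1,
        Module.Basis.prod_repr_inr]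
      simp
    · rw [LinearMap.toMatrix_apply, Matrix.fromBlocks_apply₂₂, hbinr, hcol2,
        Module.Basis.prod_repr_inr]
      simp [Matrix.one_apply, Module.Basis.repr_self, Finsupp.single_apply, eq_comm]
  rw [hmat, Matrix.det_fromBlocks_zero₂₁]
  simp

lemma det_restrict_congr {M : Type*} [AddCommGroup M] [Module ℝ M]
    (f : M →ₗ[ℝ] M) (V W : Submodule ℝ M) (hVW : V ≤ W) [FiniteDimensional ℝ W]
    (hshift : ∀ x ∈ W, f x - x ∈ V)
    (hV : ∀ x ∈ V, f x ∈ V) (hW : ∀ x ∈ W, f x ∈ W) :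
    LinearMap.det (f.restrict hV) = LinearMap.det (f.restrict hW) := by
  set g := f.restrict hW with hgdef
  set p : Submodule ℝ W := V.comap W.subtype with hp
  have hshift' : ∀ x : W, g x - x ∈ p := by
    intro x
    have := hshift x x.2
    simp only [hp, Submodule.mem_comap, Submodule.coe_subtype, AddSubgroupClass.coe_sub]
    exact this
  have hinv' : ∀ x ∈ p, g x ∈ p := by
    intro x hx
    have := hV x hx
    simpa [hp, hgdef] using this
  rw [det_restrict_of_shift g p hshift' hinv']
  set σ : p ≃ₗ[ℝ] V := Submodule.comapSubtypeEquivOfLe hVW with hσ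
  have hconj : (σ : p →ₗ[ℝ] V) ∘ₗ (g.restrict hinv') ∘ₗ (σ.symm : V →ₗ[ℝ] p)
      = f.restrict hV := by
    ext x
    have hsymm : ∀ y : V, ((σ.symm y : W) : M) = (y : M) := by
      intro y
      have : σ (σ.symm y) = y := σ.apply_symm_apply y
      have h2 := congrArg (Subtype.val) this
      rwa [hσ, Submodule.comapSubtypeEquivOfLe_apply_coe] at h2
    simp only [LinearMap.comp_apply, LinearEquiv.coe_coe, hσ,
      Submodule.comapSubtypeEquivOfLe_apply_coe, LinearMap.restrict_apply, hgdef]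
    rw [← hσ]
    exact congrArg f (hsymm x)
  rw [← hconj, LinearMap.det_conj]

lemma fredholmDet_eq_det_restrict {M : Type*} [NormedAddCommGroup M] [InnerProductSpace ℝ M]
    (T : M →L[ℝ] M) (W : Submodule ℝ M) [FiniteDimensional ℝ W]
    (hrange : LinearMap.range (T : M →ₗ[ℝ] M) ≤ W)
    (hW : ∀ x ∈ W, (1 + T : M →L[ℝ] M).toLinearMap x ∈ W) :
    fredholmDet T = LinearMap.det ((1 + T : M →L[ℝ] M).toLinearMap.restrict hW) := by
  unfold fredholmDet
  apply det_restrict_congr _ _ _ hrange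
  intro x _
  simp only [ContinuousLinearMap.coe_coe, ContinuousLinearMap.add_apply,
    ContinuousLinearMap.one_apply]
  simpa using LinearMap.mem_range_self (T : M →ₗ[ℝ] M) x

end Restrict

section MatrixCore
open Matrix
set_option linter.unusedSectionVars false
variable {n : Type*} [Fintype n] [DecidableEq n]

lemma vecMulVec_mulVec' (w v y : n → ℝ) : vecMulVec w v *ᵥ y = (v ⬝ᵥ y) • w := by
  ext i
  simp [vecMulVec_apply, mulVec, dotProduct, Finset.mul_sum, mul_assoc, mul_comm, mul_left_comm]

lemma posSemidef_vecMulVec' (w : n → ℝ) : (vecMulVec w w).PosSemidef := by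
  have h : vecMulVec w w = replicateCol Unit w * (replicateCol Unit w)ᴴ := by
    rw [conjTranspose_replicateCol, vecMulVec_eq Unit]
    simp
  rw [h]
  exact posSemidef_self_mul_conjTranspose _

lemma vecMulVec_mul_vecMulVec (a b c d : n → ℝ) :
    vecMulVec a b * vecMulVec c d = (b ⬝ᵥ c) • vecMulVec a d := by
  ext i j
  simp [vecMulVec_apply, mul_apply, dotProduct, Finset.sum_mul, Finset.mul_sum]
  congr 1; ext l; ring


lemma mul_vecMulVec (M : Matrix n n ℝ) (a b : n → ℝ) :
    M * vecMulVec a b = vecMulVec (M *ᵥ a) b := by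
  ext i j
  simp [mul_apply, vecMulVec_apply, mulVec, dotProduct, Finset.sum_mul, mul_assoc]


lemma sm_inv (B : Matrix n n ℝ) (hB : B.PosDef) (w : n → ℝ) :
    (B + vecMulVec w w)⁻¹
      = B⁻¹ - (1 + w ⬝ᵥ B⁻¹ *ᵥ w)⁻¹ • (B⁻¹ * vecMulVec w w * B⁻¹) := by
  have hk : 0 ≤ w ⬝ᵥ B⁻¹ *ᵥ w := by simpa using hB.inv.posSemidef.dotProduct_mulVec_nonneg w
  set k := w ⬝ᵥ B⁻¹ *ᵥ w with hkdef
  have hk1 : (0:ℝ) < 1 + k := by linarith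
  set c := (1 + k)⁻¹ with hcdef
  have hc : c + c * k = 1 := by
    rw [hcdef]
    field_simp
  have hBinv : B * B⁻¹ = 1 := Matrix.mul_nonsing_inv _ hB.det_pos.ne'.isUnit
  set W := vecMulVec w w with hWdef
  apply Matrix.inv_eq_right_inv
  have h1 : B * (B⁻¹ * W * B⁻¹) = W * B⁻¹ := by
    rw [← Matrix.mul_assoc, ← Matrix.mul_assoc, hBinv, Matrix.one_mul]
  have h2 : W * (B⁻¹ * W * B⁻¹) = k • (W * B⁻¹) := by
    rw [hWdef, _root_.mul_vecMulVec B⁻¹ w w, ← Matrix.mul_assoc, _root_.vecMulVec_mul_vecMulVec,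
      Matrix.smul_mul, ← hkdef]
  rw [Matrix.mul_sub, Matrix.add_mul, Matrix.add_mul, hBinv, Matrix.mul_smul, Matrix.mul_smul,
    h1, h2]
  match_scalars <;> ring_nf <;> linarith [hc]

lemma symm_dot (B : Matrix n n ℝ) (hB : B.IsHermitian) (u w : n → ℝ) :
    u ⬝ᵥ B *ᵥ w = w ⬝ᵥ B *ᵥ u := by
  have ht : Bᵀ = B := by
    have := hB.eq
    rwa [conjTranspose_eq_transpose_of_trivial] at this
  rw [dotProduct_mulVec, ← mulVec_transpose, ht, dotProduct_comm]

lemma dot_inv_add_vecMulVec_le (B : Matrix n n ℝ) (hB : B.PosDef) (w u : n → ℝ) :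
    u ⬝ᵥ (B + vecMulVec w w)⁻¹ *ᵥ u ≤ u ⬝ᵥ B⁻¹ *ᵥ u := by
  rw [sm_inv B hB w]
  have hk : 0 ≤ w ⬝ᵥ B⁻¹ *ᵥ w := by simpa using hB.inv.posSemidef.dotProduct_mulVec_nonneg w
  have hc : 0 ≤ ((1:ℝ) + w ⬝ᵥ B⁻¹ *ᵥ w)⁻¹ := by positivity
  have hMv : (B⁻¹ * vecMulVec w w * B⁻¹) *ᵥ u = (w ⬝ᵥ B⁻¹ *ᵥ u) • (B⁻¹ *ᵥ w) := by
    rw [← mulVec_mulVec, ← mulVec_mulVec, vecMulVec_mulVec', mulVec_smul]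
  rw [sub_mulVec, dotProduct_sub, smul_mulVec, dotProduct_smul, hMv, dotProduct_smul]
  have hsw : u ⬝ᵥ B⁻¹ *ᵥ w = w ⬝ᵥ B⁻¹ *ᵥ u := symm_dot _ hB.inv.isHermitian u w
  rw [hsw, smul_eq_mul, smul_eq_mul]
  nlinarith [sq_nonneg (w ⬝ᵥ B⁻¹ *ᵥ u), mul_nonneg hc (sq_nonneg (w ⬝ᵥ B⁻¹ *ᵥ u))]

lemma det_add_vecMulVec (B : Matrix n n ℝ) (hB : B.PosDef) (u : n → ℝ) :
    (B + vecMulVec u u).det = B.det * (1 + u ⬝ᵥ B⁻¹ *ᵥ u) := by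
  rw [vecMulVec_eq Unit, det_add_replicateCol_mul_replicateRow hB.det_pos.ne'.isUnit]
  congr 1
  rw [det_unique]
  simp [Matrix.mul_apply, dotProduct, mulVec, replicateRow, replicateCol, Finset.mul_sum, mul_comm, mul_left_comm]
  rw [Finset.sum_comm]
  exact Finset.sum_congr rfl fun x _ => Finset.sum_congr rfl fun i _ => by ring

lemma posSemidef_sum {ι : Type*} (S : Finset ι) (x : ι → n → ℝ) :
    (∑ i ∈ S, vecMulVec (x i) (x i)).PosSemidef := by
  classical
  induction S using Finset.induction with
  | empty => simpa using Matrix.PosSemidef.zero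
  | insert _ _ h ih =>
    rw [Finset.sum_insert h]
    exact (posSemidef_vecMulVec' _).add ih

lemma posDef_one_add_sum {ι : Type*} (S : Finset ι) (x : ι → n → ℝ) :
    ((1 : Matrix n n ℝ) + ∑ i ∈ S, vecMulVec (x i) (x i)).PosDef :=
  Matrix.PosDef.add_posSemidef Matrix.PosDef.one (posSemidef_sum S x)

theorem matrix_core {ι : Type*} [DecidableEq ι] (x : ι → n → ℝ) (S : Finset ι) (r t : ι)
    (hr : r ∉ S) (ht : t ∉ S) (hrt : r ≠ t) :
    Real.log ((1 : Matrix n n ℝ) + ∑ i ∈ insert r S, vecMulVec (x i) (x i)).det -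
        Real.log ((1 : Matrix n n ℝ) + ∑ i ∈ S, vecMulVec (x i) (x i)).det ≥
      Real.log ((1 : Matrix n n ℝ) + ∑ i ∈ insert r (insert t S), vecMulVec (x i) (x i)).det -
        Real.log ((1 : Matrix n n ℝ) + ∑ i ∈ insert t S, vecMulVec (x i) (x i)).det := by
  set A := fun T : Finset ι => (1 : Matrix n n ℝ) + ∑ i ∈ T, vecMulVec (x i) (x i) with hA
  have hpd : ∀ T, (A T).PosDef := fun T => posDef_one_add_sum T x
  have hins : ∀ (T : Finset ι) (a : ι), a ∉ T → A (insert a T) = A T + vecMulVec (x a) (x a) := by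
    intro T a haT
    rw [hA]
    dsimp only
    rw [Finset.sum_insert haT]
    abel
  have key : ∀ (T : Finset ι) (a : ι), a ∉ T →
      Real.log (A (insert a T)).det - Real.log (A T).det
        = Real.log (1 + x a ⬝ᵥ (A T)⁻¹ *ᵥ x a) := by
    intro T a haT
    have hq : 0 ≤ x a ⬝ᵥ (A T)⁻¹ *ᵥ x a := by simpa using (hpd T).inv.posSemidef.dotProduct_mulVec_nonneg (x a)
    rw [hins T a haT, det_add_vecMulVec _ (hpd T),
      Real.log_mul (hpd T).det_pos.ne' (by linarith : (0:ℝ) < 1 + x a ⬝ᵥ (A T)⁻¹ *ᵥ x a).ne']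
    ring
  have hrt' : r ∉ insert t S := by
    simp [Finset.mem_insert, hrt, hr]
  rw [ge_iff_le, key S r hr, key (insert t S) r hrt']
  have hq2 : 0 ≤ x r ⬝ᵥ (A (insert t S))⁻¹ *ᵥ x r := by simpa using (hpd (insert t S)).inv.posSemidef.dotProduct_mulVec_nonneg (x r)
  apply Real.log_le_log (by linarith)
  have := dot_inv_add_vecMulVec_le (A S) (hpd S) (x t) (x r)
  rw [← hins S t ht] at this
  linarith

end MatrixCore

section Transfer
open Matrix

lemma toMatrix_rankOne {E : Type*} [NormedAddCommGroup E] [InnerProductSpace ℝ E]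
    [FiniteDimensional ℝ E] (u : E) :
    LinearMap.toMatrix (stdOrthonormalBasis ℝ E).toBasis (stdOrthonormalBasis ℝ E).toBasis
        (rankOne u u).toLinearMap
      = vecMulVec (fun j => ⟪stdOrthonormalBasis ℝ E j, u⟫)
          (fun j => ⟪stdOrthonormalBasis ℝ E j, u⟫) := by
  set b := stdOrthonormalBasis ℝ E
  ext i j
  rw [LinearMap.toMatrix_apply, vecMulVec_apply]
  have h1 : b.toBasis j = b j := b.coe_toBasis ▸ rfl
  rw [h1]
  have h2 : (rankOne u u).toLinearMap (b j) = ⟪u, b j⟫ • u := by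
    simp [rankOne]
  rw [h2, _root_.map_smul]
  have h3 : b.toBasis.repr u i = ⟪b i, u⟫ := by
    rw [b.coe_toBasis_repr_apply, b.repr_apply_apply]
  rw [Finsupp.smul_apply, h3]
  simp only [smul_eq_mul]
  rw [real_inner_comm u (b j)]
  ring

lemma toMatrix_one_add_sum_rankOne {E : Type*} [NormedAddCommGroup E] [InnerProductSpace ℝ E]
    [FiniteDimensional ℝ E] {ι : Type*} (S : Finset ι) (v : ι → E) :
    LinearMap.toMatrix (stdOrthonormalBasis ℝ E).toBasis (stdOrthonormalBasis ℝ E).toBasis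
        (LinearMap.id + ∑ i ∈ S, (rankOne (v i) (v i)).toLinearMap)
      = 1 + ∑ i ∈ S, vecMulVec (fun j => ⟪stdOrthonormalBasis ℝ E j, v i⟫)
          (fun j => ⟪stdOrthonormalBasis ℝ E j, v i⟫) := by
  rw [map_add, map_sum, LinearMap.toMatrix_id]
  congr 1
  exact Finset.sum_congr rfl fun i _ => toMatrix_rankOne (v i)

end Transfer


open Matrix in
/-- **Submodularity of the expected information gain.** Let `f₁, …, f_d ∈ M` (a real Hilbert
space), `H(S) = Σ_{i∈S} fᵢ ⊗ fᵢ`, and `Φ(S) = log det(I + H(S))` (Fredholm determinant).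
Then for every `S ⊆ {1,…,d}` and distinct `r, t ∉ S`,
`Φ(S ∪ {r}) - Φ(S) ≥ Φ(S ∪ {r,t}) - Φ(S ∪ {t})`. -/
theorem eig_submodular {M : Type*} [NormedAddCommGroup M] [InnerProductSpace ℝ M]
    [CompleteSpace M] {d : ℕ} (f : Fin d → M) (S : Finset (Fin d)) (r t : Fin d)
    (hr : r ∉ S) (ht : t ∉ S) (hrt : r ≠ t) :
    Real.log (fredholmDet (∑ i ∈ insert r S, rankOne (f i) (f i))) -
        Real.log (fredholmDet (∑ i ∈ S, rankOne (f i) (f i))) ≥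
      Real.log (fredholmDet (∑ i ∈ insert r (insert t S), rankOne (f i) (f i))) -
        Real.log (fredholmDet (∑ i ∈ insert t S, rankOne (f i) (f i))) := by
  classical
  set W : Submodule ℝ M := Submodule.span ℝ (Set.range f) with hWdef
  haveI : FiniteDimensional ℝ W := FiniteDimensional.span_of_finite ℝ (Set.finite_range f)
  have hfW : ∀ i, f i ∈ W := fun i => Submodule.subset_span (Set.mem_range_self i)
  set g : Fin d → W := fun i => ⟨f i, hfW i⟩ with hgdef
  set x : Fin d → Fin (Module.finrank ℝ W) → ℝ :=
    fun i j => ⟪stdOrthonormalBasis ℝ W j, g i⟫ with hxdef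
  have key : ∀ T : Finset (Fin d),
      fredholmDet (∑ i ∈ T, rankOne (f i) (f i)) =
        ((1 : Matrix (Fin (Module.finrank ℝ W)) (Fin (Module.finrank ℝ W)) ℝ)
          + ∑ i ∈ T, vecMulVec (x i) (x i)).det := by
    intro T
    set Op : M →L[ℝ] M := ∑ i ∈ T, rankOne (f i) (f i) with hOp
    have happly : ∀ y : M, Op y = ∑ i ∈ T, ⟪f i, y⟫ • f i := by
      intro y
      rw [hOp, ContinuousLinearMap.sum_apply]
      exact Finset.sum_congr rfl fun i _ => by simp [rankOne]
    have hrange : LinearMap.range (Op : M →ₗ[ℝ] M) ≤ W := by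
      rintro y ⟨z, rfl⟩
      simp only [ContinuousLinearMap.coe_coe]
      rw [happly]
      exact Submodule.sum_mem _ fun i _ => Submodule.smul_mem _ _ (hfW i)
    have hWinv : ∀ y ∈ W, (1 + Op : M →L[ℝ] M).toLinearMap y ∈ W := by
      intro y hy
      simp only [ContinuousLinearMap.coe_coe, ContinuousLinearMap.add_apply,
        ContinuousLinearMap.one_apply]
      exact Submodule.add_mem _ hy (hrange ⟨y, rfl⟩)
    rw [fredholmDet_eq_det_restrict Op W hrange hWinv]
    have hres : (1 + Op : M →L[ℝ] M).toLinearMap.restrict hWinv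
        = LinearMap.id + ∑ i ∈ T, (rankOne (g i) (g i)).toLinearMap := by
      ext y
      simp only [LinearMap.restrict_coe_apply, ContinuousLinearMap.coe_coe,
        ContinuousLinearMap.add_apply, ContinuousLinearMap.one_apply,
        LinearMap.add_apply, LinearMap.id_apply, LinearMap.coe_sum, Finset.sum_apply]
      rw [happly]
      push_cast
      congr 1
    rw [hres, ← LinearMap.det_toMatrix (stdOrthonormalBasis ℝ W).toBasis,
      toMatrix_one_add_sum_rankOne]
  rw [key, key, key, key]
  exact matrix_core x S r t hr ht hrt
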